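/- Fix d ≥ 1. Let μ = (μ_1, ..., μ_d) be a tuple of integers with μ_1 ≥ μ_2 ≥ ... ≥ μ_d. For a tuple λ = (λ_0, ..., λ_d) of integers with λ_0 ≥ ... ≥ λ_d and an index 0 ≤ j ≤ d, define μ(λ(j)) = (λ_0 − λ_j + j + 1, ..., λ_{j−1} − λ_j + j + 1, λ_{j+1} − λ_j + j, ..., λ_d − λ_j + j). Then there exist j ∈ {0,...,d} and λ with λ_d = 0 such that μ = μ(λ(j)) if and only if μ_s ≠ s for all 1 ≤ s ≤ d. Moreover, in that case the pair (j, λ) with λ_d = 0 is unique, and j is the largest index in {0,...,d} with μ_j ≥ j + 1 (with the convention μ_0 = +∞). -/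

import Mathlib

/-- The tuple `μ(λ(j))` associated with a weakly decreasing tuple
`λ = (λ_0, ..., λ_d)` and an index `0 ≤ j ≤ d`: its entry at (1-based)
position `s` is `λ_{s-1} - λ_j + j + 1` for `s ≤ j` and `λ_s - λ_j + j`
for `s > j`. -/
def muOf {d : ℕ} (lam : Fin (d + 1) → ℤ) (j : Fin (d + 1)) : Fin d → ℤ :=
  fun k =>
    if (k : ℕ) < (j : ℕ) then lam k.castSucc - lam j + ((j : ℕ) : ℤ) + 1
    else lam k.succ - lam j + ((j : ℕ) : ℤ)

lemma muOf_lt {d : ℕ} {lam : Fin (d+1) → ℤ} (hlam : Antitone lam)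
    (j : Fin (d+1)) (k : Fin d) (h : (k:ℕ) < (j:ℕ)) :
    ((j:ℕ):ℤ) + 1 ≤ muOf lam j k := by
  have h1 : lam j ≤ lam k.castSucc :=
    hlam (by rw [Fin.le_def, Fin.coe_castSucc]; omega)
  simp only [muOf, if_pos h]
  linarith

lemma muOf_ge {d : ℕ} {lam : Fin (d+1) → ℤ} (hlam : Antitone lam)
    (j : Fin (d+1)) (k : Fin d) (h : (j:ℕ) ≤ (k:ℕ)) :
    muOf lam j k ≤ ((j:ℕ):ℤ) := by
  have h1 : lam k.succ ≤ lam j := hlam (by rw [Fin.le_def, Fin.val_succ]; omega)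
  simp only [muOf, if_neg (by omega : ¬ ((k:ℕ) < (j:ℕ)))]
  linarith

/-- λ is determined by μ and j. -/
lemma lam_determined {d : ℕ} (hd : 1 ≤ d) {μ : Fin d → ℤ} {j : Fin (d+1)}
    {lam₁ lam₂ : Fin (d+1) → ℤ}
    (h₁ : lam₁ (Fin.last d) = 0) (e₁ : μ = muOf lam₁ j)
    (h₂ : lam₂ (Fin.last d) = 0) (e₂ : μ = muOf lam₂ j) : lam₁ = lam₂ := by
  have hc : lam₁ j = lam₂ j := by
    by_cases hjd : (j:ℕ) = d
    · have : j = Fin.last d := Fin.ext (by rw [Fin.val_last, hjd])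
      rw [this, h₁, h₂]
    · have hjd' : (j:ℕ) < d := lt_of_le_of_ne (Nat.lt_succ_iff.mp j.isLt) hjd
      set k : Fin d := ⟨d-1, by omega⟩ with hk
      have hks : k.succ = Fin.last d := Fin.ext (by simp [hk]; omega)
      have hnk : ¬ ((k:ℕ) < (j:ℕ)) := by simp [hk]; omega
      have q₁ := congrFun e₁ k
      have q₂ := congrFun e₂ k
      simp only [muOf, if_neg hnk, hks, h₁, h₂] at q₁ q₂
      omega
  funext i
  rcases lt_trichotomy (i:ℕ) (j:ℕ) with h | h | h
  · have hi : (i:ℕ) < d := by have := j.isLt; omega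
    set k : Fin d := ⟨i, hi⟩ with hk
    have hik : i = k.castSucc := Fin.ext rfl
    have q₁ := congrFun e₁ k
    have q₂ := congrFun e₂ k
    simp only [muOf, if_pos (show (k:ℕ) < (j:ℕ) from h)] at q₁ q₂
    rw [hik]
    omega
  · have : i = j := Fin.ext h
    rw [this, hc]
  · have hi : (i:ℕ) - 1 < d := by have := i.isLt; omega
    set k : Fin d := ⟨(i:ℕ) - 1, hi⟩ with hk
    have hik : i = k.succ := Fin.ext (by simp [hk]; omega)
    have hnk : ¬ ((k:ℕ) < (j:ℕ)) := by simp [hk]; omega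
    have q₁ := congrFun e₁ k
    have q₂ := congrFun e₂ k
    simp only [muOf, if_neg hnk] at q₁ q₂
    rw [hik]
    omega

/-- Existence of a good index jn with the two-sided bounds. -/
lemma exists_jn {d : ℕ} (hd : 1 ≤ d) (μ : Fin d → ℤ) (hμ : Antitone μ)
    (hne : ∀ s : Fin d, μ s ≠ ((s:ℕ):ℤ) + 1) :
    ∃ jn : ℕ, jn ≤ d ∧ (∀ k : Fin d, (k:ℕ) < jn → ((jn:ℤ) + 1 ≤ μ k)) ∧
      (∀ k : Fin d, jn ≤ (k:ℕ) → μ k ≤ (jn:ℤ)) := by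
  have step : ∀ k : Fin d, ¬ (μ k ≤ ((k:ℕ):ℤ)) → ((k:ℕ):ℤ) + 2 ≤ μ k := by
    intro k h
    have := hne k
    omega
  by_cases h : ∃ n : ℕ, ∃ hn : n < d, μ ⟨n, hn⟩ ≤ ((n:ℕ):ℤ)
  · classical
    obtain ⟨hjd, hjle⟩ := Nat.find_spec h
    refine ⟨Nat.find h, le_of_lt hjd, ?_, ?_⟩
    · intro k hk
      have hj1 : Nat.find h - 1 < d := by omega
      have hmin : ¬ (μ ⟨Nat.find h - 1, hj1⟩ ≤ (((Nat.find h - 1 : ℕ)):ℤ)) := by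
        intro hcon
        exact Nat.find_min h (m := Nat.find h - 1) (by omega) ⟨hj1, hcon⟩
      have h2 := step ⟨Nat.find h - 1, hj1⟩ hmin
      have hmono : μ ⟨Nat.find h - 1, hj1⟩ ≤ μ k :=
        hμ (by rw [Fin.le_def]; simp only [Fin.val_mk]; omega)
      simp only [Fin.val_mk] at h2
      have hcast : ((Nat.find h - 1 : ℕ) : ℤ) = (Nat.find h : ℤ) - 1 := by omega
      omega
    · intro k hk
      have hmono : μ k ≤ μ ⟨Nat.find h, hjd⟩ :=
        hμ (by rw [Fin.le_def]; simp only [Fin.val_mk]; omega)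
      omega
  · push_neg at h
    refine ⟨d, le_refl d, ?_, ?_⟩
    · intro k _
      have hj1 : d - 1 < d := by omega
      have h2 := step ⟨d-1, hj1⟩ (not_le.mpr (h (d-1) hj1))
      have hmono : μ ⟨d-1, hj1⟩ ≤ μ k := hμ (by rw [Fin.le_def]; simp only [Fin.val_mk]; omega)
      simp only [Fin.val_mk] at h2
      have hcast : ((d - 1 : ℕ) : ℤ) = (d : ℤ) - 1 := by omega
      omega
    · intro k hk
      exact absurd hk (by have := k.isLt; omega)

theorem stmt6 {d : ℕ} (hd : 1 ≤ d) (μ : Fin d → ℤ) (hμ : Antitone μ) :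
    ((∃ (j : Fin (d + 1)) (lam : Fin (d + 1) → ℤ),
        Antitone lam ∧ lam (Fin.last d) = 0 ∧ μ = muOf lam j) ↔
      ∀ s : Fin d, μ s ≠ ((s : ℕ) : ℤ) + 1) ∧
    (∀ (j₁ j₂ : Fin (d + 1)) (lam₁ lam₂ : Fin (d + 1) → ℤ),
      Antitone lam₁ → lam₁ (Fin.last d) = 0 → μ = muOf lam₁ j₁ →
      Antitone lam₂ → lam₂ (Fin.last d) = 0 → μ = muOf lam₂ j₂ →
      j₁ = j₂ ∧ lam₁ = lam₂) ∧
    (∀ (j : Fin (d + 1)) (lam : Fin (d + 1) → ℤ),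
      Antitone lam → lam (Fin.last d) = 0 → μ = muOf lam j →
      (∀ i : Fin d, (i : ℕ) + 1 = (j : ℕ) → ((j : ℕ) : ℤ) + 1 ≤ μ i) ∧
      ∀ j' : Fin (d + 1),
        (∀ i : Fin d, (i : ℕ) + 1 = (j' : ℕ) → ((j' : ℕ) : ℤ) + 1 ≤ μ i) →
        j' ≤ j) := by
  refine ⟨⟨?_, ?_⟩, ?_, ?_⟩
  · rintro ⟨j, lam, hlam, hlast, heq⟩ s
    rcases lt_or_ge (s:ℕ) (j:ℕ) with h | h
    · have := muOf_lt hlam j s h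
      rw [← heq] at this
      omega
    · have := muOf_ge hlam j s h
      rw [← heq] at this
      omega
  · intro hne
    obtain ⟨jn, hjd, B1, B2⟩ := exists_jn hd μ hμ hne
    set c : ℤ := if jn = d then 0 else (jn:ℤ) - μ ⟨d-1, by omega⟩ with hc
    set lam : Fin (d+1) → ℤ := fun i =>
      if h1 : (i:ℕ) < jn then μ ⟨i, by omega⟩ - jn - 1 + c
      else if h2 : (i:ℕ) = jn then c
      else μ ⟨(i:ℕ) - 1, by have := i.isLt; omega⟩ - jn + c with hlamdef
    have lam_lt : ∀ (i : Fin (d+1)) (h : (i:ℕ) < jn),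
        lam i = μ ⟨i, by omega⟩ - jn - 1 + c := by
      intro i h
      simp only [hlamdef, dif_pos h]
    have lam_eq : ∀ (i : Fin (d+1)), (i:ℕ) = jn → lam i = c := by
      intro i h
      simp only [hlamdef, dif_neg (by omega : ¬ ((i:ℕ) < jn)), dif_pos h]
    have lam_gt : ∀ (i : Fin (d+1)) (h : jn < (i:ℕ)),
        lam i = μ ⟨(i:ℕ) - 1, by have := i.isLt; omega⟩ - jn + c := by
      intro i h
      simp only [hlamdef, dif_neg (by omega : ¬ ((i:ℕ) < jn)),
        dif_neg (by omega : ¬ ((i:ℕ) = jn))]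
    refine ⟨⟨jn, by omega⟩, lam, ?_, ?_, ?_⟩
    · rw [Fin.antitone_iff_succ_le]
      intro i
      have hcs : (i.castSucc : ℕ) = (i:ℕ) := rfl
      have hss : (i.succ : ℕ) = (i:ℕ) + 1 := rfl
      rcases lt_trichotomy ((i:ℕ)+1) jn with h | h | h
      · rw [lam_lt i.succ (by omega), lam_lt i.castSucc (by omega)]
        have : μ ⟨(i.succ : ℕ), by omega⟩ ≤ μ ⟨(i.castSucc : ℕ), by omega⟩ :=
          hμ (by rw [Fin.le_def]; simp)
        linarith
      · rw [lam_eq i.succ (by omega), lam_lt i.castSucc (by omega)]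
        have := B1 ⟨(i:ℕ), i.isLt⟩ (by simpa using by omega)
        have he : μ ⟨(i.castSucc : ℕ), by omega⟩ = μ ⟨(i:ℕ), i.isLt⟩ := by
          congr 1
        rw [he]
        linarith
      · rcases Nat.lt_or_ge (i:ℕ) jn with h' | h'
        · omega
        rcases Nat.eq_or_lt_of_le h' with h' | h'
        · rw [lam_gt i.succ (by omega), lam_eq i.castSucc (by omega)]
          have := B2 ⟨(i:ℕ), i.isLt⟩ (by simp [Fin.val_mk]; omega)
          have he : μ ⟨(i.succ : ℕ) - 1, by omega⟩ = μ ⟨(i:ℕ), i.isLt⟩ := by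
            congr 1
          rw [he]
          linarith
        · rw [lam_gt i.succ (by omega), lam_gt i.castSucc (by omega)]
          have : μ ⟨(i.succ : ℕ) - 1, by omega⟩ ≤ μ ⟨(i.castSucc : ℕ) - 1, by omega⟩ :=
            hμ (by rw [Fin.le_def]; simp only [Fin.val_mk, hss, hcs]; omega)
          linarith
    · by_cases hjdd : jn = d
      · rw [lam_eq (Fin.last d) (by simp [hjdd]), hc, if_pos hjdd]
      · rw [lam_gt (Fin.last d) (by simp; omega), hc, if_neg hjdd]
        simp only [Fin.val_last]
        ring
    · funext k
      have hjv : ((⟨jn, by omega⟩ : Fin (d+1)) : ℕ) = jn := rfl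
      have hlamj : lam ⟨jn, by omega⟩ = c := lam_eq _ rfl
      rcases lt_or_ge (k:ℕ) jn with h | h
      · have hcs : (k.castSucc : ℕ) = (k:ℕ) := rfl
        rw [show μ k = muOf lam ⟨jn, by omega⟩ k ↔ _ from Iff.rfl]
        simp only [muOf, hjv, if_pos h, hlamj]
        rw [lam_lt k.castSucc (by omega)]
        have he : μ ⟨(k.castSucc : ℕ), by omega⟩ = μ k := by
          congr 1
        rw [he]
        ring
      · have hss : (k.succ : ℕ) = (k:ℕ) + 1 := rfl
        simp only [muOf, hjv, if_neg (by omega : ¬ ((k:ℕ) < jn)), hlamj]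
        rw [lam_gt k.succ (by omega)]
        have he : μ ⟨(k.succ : ℕ) - 1, by omega⟩ = μ k := by
          congr 1
        rw [he]
        ring
  · intro j₁ j₂ lam₁ lam₂ h₁a h₁l h₁e h₂a h₂l h₂e
    have hj : j₁ = j₂ := by
      by_contra hne
      rcases lt_trichotomy (j₁:ℕ) (j₂:ℕ) with h | h | h
      · have hk : (j₁:ℕ) < d := by have := j₂.isLt; omega
        set k : Fin d := ⟨j₁, hk⟩
        have b1 := muOf_ge h₁a j₁ k (le_refl _)
        have b2 := muOf_lt h₂a j₂ k h
        rw [← h₁e] at b1; rw [← h₂e] at b2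
        omega
      · exact hne (Fin.ext h)
      · have hk : (j₂:ℕ) < d := by have := j₁.isLt; omega
        set k : Fin d := ⟨j₂, hk⟩
        have b1 := muOf_ge h₂a j₂ k (le_refl _)
        have b2 := muOf_lt h₁a j₁ k h
        rw [← h₂e] at b1; rw [← h₁e] at b2
        omega
    subst hj
    exact ⟨rfl, lam_determined hd h₁l h₁e h₂l h₂e⟩
  · intro j lam hlam hlast heq
    constructor
    · intro i hi
      have := muOf_lt hlam j i (by omega)
      rw [← heq] at this
      exact this
    · intro j' hj'
      by_contra hlt
      push_neg at hlt
      have h : (j:ℕ) < (j':ℕ) := hlt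
      have hk : (j':ℕ) - 1 < d := by have := j'.isLt; omega
      set i : Fin d := ⟨(j':ℕ) - 1, hk⟩
      have hi : (i:ℕ) + 1 = (j':ℕ) := by show (j':ℕ) - 1 + 1 = (j':ℕ); omega
      have b1 := hj' i hi
      have b2 := muOf_ge hlam j i (by show (j:ℕ) ≤ (j':ℕ) - 1; omega)
      rw [← heq] at b2
      omega
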